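/- Let (X,d) be a finite ultrametric space with |X| ≥ 3. If X contains no equilateral triangle (i.e., there are no three distinct points x,y,z with d(x,y) = d(y,z) = d(z,x)), then for every subset X₁ ⊆ X with |X₁| ≥ 3 there is a Hamiltonian cycle through X₁ with exactly two edges of maximal weight (i.e., a cyclic enumeration of X₁ in which exactly two consecutive-pair distances attain the maximum among all consecutive-pair distances). -/

import Mathlib

/-- Auxiliary: walking through a block of `B`-points and wrapping around to an
`A`-point contributes exactly one edge of weight `M`, all edges being `≤ M`. -/
lemma auxB_count {X : Type*} [DecidableEq X] (d : X → X → ℝ) (M : ℝ)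
    (A B : X → Prop)
    (hBB : ∀ x y, B x → B y → d x y < M)
    (hBA : ∀ x y, B x → A y → d x y = M) :
    ∀ (bs : List X) (cur first : X), B cur → (∀ x ∈ bs, B x) → A first →
      (∀ r ∈ (List.zip (cur :: bs) (bs ++ [first])).map (fun p => d p.1 p.2), r ≤ M) ∧
      ((List.zip (cur :: bs) (bs ++ [first])).map (fun p => d p.1 p.2)).count M = 1 := by
  intro bs
  induction bs with
  | nil =>
    intro cur first hc _ hf
    have hM : d cur first = M := hBA _ _ hc hf
    simp [hM]
  | cons y ys ih =>
    intro cur first hc hmem hf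
    have h1 : d cur y < M := hBB _ _ hc (hmem y (by simp))
    have hIH := ih y first (hmem y (by simp)) (fun x hx => hmem x (by simp [hx])) hf
    constructor
    · intro r hr
      simp only [List.cons_append, List.zip_cons_cons, List.map_cons, List.mem_cons] at hr
      rcases hr with rfl | hr
      · exact le_of_lt h1
      · exact hIH.1 r (by simpa using hr)
    · simp only [List.cons_append, List.zip_cons_cons, List.map_cons]
      rw [List.count_cons_of_ne (by exact ne_of_lt h1)]
      exact hIH.2

/-- Auxiliary: walking through a block of `A`-points, then a nonempty block of
`B`-points, wrapping around to an `A`-point gives exactly two edges of weight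
`M`, all edges being `≤ M`. -/
lemma auxA_count {X : Type*} [DecidableEq X] (d : X → X → ℝ) (M : ℝ)
    (A B : X → Prop)
    (hAA : ∀ x y, A x → A y → d x y < M)
    (hAB : ∀ x y, A x → B y → d x y = M)
    (hBB : ∀ x y, B x → B y → d x y < M)
    (hBA : ∀ x y, B x → A y → d x y = M) :
    ∀ (as lB : List X) (cur first : X), A cur → (∀ x ∈ as, A x) →
      lB ≠ [] → (∀ x ∈ lB, B x) → A first →
      (∀ r ∈ (List.zip (cur :: (as ++ lB)) ((as ++ lB) ++ [first])).map
          (fun p => d p.1 p.2), r ≤ M) ∧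
      ((List.zip (cur :: (as ++ lB)) ((as ++ lB) ++ [first])).map
          (fun p => d p.1 p.2)).count M = 2 := by
  intro as
  induction as with
  | nil =>
    intro lB cur first hc _ hne hmemB hf
    obtain ⟨b, bs, rfl⟩ := List.exists_cons_of_ne_nil hne
    have hb : B b := hmemB b (by simp)
    have h1 : d cur b = M := hAB _ _ hc hb
    have hIH := auxB_count d M A B hBB hBA bs b first hb
      (fun x hx => hmemB x (by simp [hx])) hf
    constructor
    · intro r hr
      simp only [List.nil_append, List.cons_append, List.zip_cons_cons,
        List.map_cons, List.mem_cons] at hr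
      rcases hr with rfl | hr
      · exact le_of_eq h1
      · exact hIH.1 r (by simpa using hr)
    · simp only [List.nil_append, List.cons_append, List.zip_cons_cons, List.map_cons]
      rw [h1, List.count_cons_self, hIH.2]
  | cons y ys ih =>
    intro lB cur first hc hmemA hne hmemB hf
    have hy : A y := hmemA y (by simp)
    have h1 : d cur y < M := hAA _ _ hc hy
    have hIH := ih lB y first hy (fun x hx => hmemA x (by simp [hx])) hne hmemB hf
    constructor
    · intro r hr
      simp only [List.cons_append, List.zip_cons_cons, List.map_cons, List.mem_cons] at hr
      rcases hr with rfl | hr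
      · exact le_of_lt h1
      · exact hIH.1 r (by simpa using hr)
    · simp only [List.cons_append, List.zip_cons_cons, List.map_cons]
      rw [List.count_cons_of_ne (by exact ne_of_lt h1)]
      exact hIH.2

/-- If a finite ultrametric space with at least 3 points contains no equilateral
triangle, then every subset with at least 3 points admits a Hamiltonian cycle
with exactly two edges of maximal weight. -/
theorem no_equilateral_implies_cycles {X : Type*} [Fintype X] [DecidableEq X]
    (d : X → X → ℝ)
    (hcard : 3 ≤ Fintype.card X)
    (hnonneg : ∀ x y, 0 ≤ d x y)
    (hsymm : ∀ x y, d x y = d y x)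
    (hzero : ∀ x y, d x y = 0 ↔ x = y)
    (hultra : ∀ x y z, d x y ≤ max (d x z) (d z y))
    (hnoeq : ¬∃ x y z : X, x ≠ y ∧ y ≠ z ∧ x ≠ z ∧
      d x y = d y z ∧ d y z = d z x) :
    ∀ X₁ : Finset X, 3 ≤ X₁.card →
      ∃ l : List X, l.Nodup ∧ l.toFinset = X₁ ∧
        ∃ M : ℝ,
          (∀ r ∈ (l.zip (l.rotate 1)).map (fun p => d p.1 p.2), r ≤ M) ∧
          ((l.zip (l.rotate 1)).map (fun p => d p.1 p.2)).count M = 2 := by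
  intro s hs
  -- pick the pair of maximal distance
  have hsne : (s ×ˢ s).Nonempty := by
    have : s.Nonempty := Finset.card_pos.mp (by omega)
    exact this.product this
  obtain ⟨p, hp, hpmax⟩ := Finset.exists_max_image (s ×ˢ s) (fun p => d p.1 p.2) hsne
  obtain ⟨a0, b0⟩ := p
  set M : ℝ := d a0 b0 with hMdef
  have ha0s : a0 ∈ s := (Finset.mem_product.mp hp).1
  have hb0s : b0 ∈ s := (Finset.mem_product.mp hp).2
  have hMmax : ∀ x ∈ s, ∀ y ∈ s, d x y ≤ M := by
    intro x hx y hy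
    exact hpmax (x, y) (Finset.mem_product.mpr ⟨hx, hy⟩)
  -- M > 0
  have hMpos : 0 < M := by
    obtain ⟨x, hx, y, hy, hxy⟩ := Finset.one_lt_card.mp (by omega : 1 < s.card)
    have h1 : d x y ≤ M := hMmax x hx y hy
    have h2 : 0 < d x y := lt_of_le_of_ne (hnonneg x y)
      (fun h => hxy ((hzero x y).mp h.symm))
    linarith
  -- the two classes
  set A : Finset X := s.filter (fun x => d a0 x < M) with hAdef
  set B : Finset X := s.filter (fun x => ¬ d a0 x < M) with hBdef
  have ha0A : a0 ∈ A := by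
    simp only [hAdef, Finset.mem_filter]
    refine ⟨ha0s, ?_⟩
    have : d a0 a0 = 0 := (hzero a0 a0).mpr rfl
    linarith
  have hb0B : b0 ∈ B := by
    simp only [hBdef, Finset.mem_filter]
    exact ⟨hb0s, lt_irrefl _⟩
  have hBeq : ∀ x ∈ B, d a0 x = M := by
    intro x hx
    simp only [hBdef, Finset.mem_filter] at hx
    exact le_antisymm (hMmax a0 ha0s x hx.1) (not_lt.mp hx.2)
  have hAlt : ∀ x ∈ A, d a0 x < M := by
    intro x hx
    simp only [hAdef, Finset.mem_filter] at hx
    exact hx.2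
  have hAA : ∀ x y, x ∈ A → y ∈ A → d x y < M := by
    intro x y hx hy
    have := hultra x y a0
    have h1 : d x a0 < M := by rw [← hsymm]; exact hAlt x hx
    have h2 : d a0 y < M := hAlt y hy
    calc d x y ≤ max (d x a0) (d a0 y) := this
      _ < M := max_lt h1 h2
  have hBB : ∀ x y, x ∈ B → y ∈ B → d x y < M := by
    intro x y hx hy
    rcases eq_or_ne x y with rfl | hxy
    · have : d x x = 0 := (hzero x x).mpr rfl
      linarith
    have hle : d x y ≤ M := hMmax x (Finset.mem_of_mem_filter x hx) y
      (Finset.mem_of_mem_filter y hy)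
    rcases lt_or_eq_of_le hle with h | h
    · exact h
    exfalso
    apply hnoeq
    have hax : d a0 x = M := hBeq x hx
    have hay : d a0 y = M := hBeq y hy
    have ha0x : a0 ≠ x := by
      intro hh; rw [← hh] at hax
      have : d a0 a0 = 0 := (hzero a0 a0).mpr rfl
      linarith
    have ha0y : a0 ≠ y := by
      intro hh; rw [← hh] at hay
      have : d a0 a0 = 0 := (hzero a0 a0).mpr rfl
      linarith
    exact ⟨a0, x, y, ha0x, hxy, ha0y, by rw [hax, h], by rw [h, hsymm y a0, hay]⟩
  have hAB : ∀ x y, x ∈ A → y ∈ B → d x y = M := by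
    intro x y hx hy
    have h1 : d x a0 < M := by rw [← hsymm]; exact hAlt x hx
    have h2 : d a0 y = M := hBeq y hy
    have hle : d x y ≤ M := by
      calc d x y ≤ max (d x a0) (d a0 y) := hultra x y a0
        _ ≤ M := max_le (le_of_lt h1) (le_of_eq h2)
    have hge : M ≤ d x y := by
      have := hultra a0 y x
      rw [h2] at this
      rcases max_cases (d a0 x) (d x y) with ⟨he, _⟩ | ⟨he, _⟩
      · rw [he] at this
        have := hAlt x hx
        linarith
      · rw [he] at this; exact this
    linarith
  have hBA : ∀ x y, x ∈ B → y ∈ A → d x y = M := by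
    intro x y hx hy
    rw [hsymm]; exact hAB y x hy hx
  -- build the list
  set lA : List X := A.toList with hlA
  set lB : List X := B.toList with hlB
  have hlAne : lA ≠ [] := by
    simp only [hlA, ← List.length_pos_iff_ne_nil]
    rw [Finset.length_toList]
    exact Finset.card_pos.mpr ⟨a0, ha0A⟩
  have hlBne : lB ≠ [] := by
    simp only [hlB, ← List.length_pos_iff_ne_nil]
    rw [Finset.length_toList]
    exact Finset.card_pos.mpr ⟨b0, hb0B⟩
  have hmemA : ∀ x ∈ lA, x ∈ A := fun x hx => (Finset.mem_toList).mp hx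
  have hmemB : ∀ x ∈ lB, x ∈ B := fun x hx => (Finset.mem_toList).mp hx
  obtain ⟨a, as, hAs⟩ := List.exists_cons_of_ne_nil hlAne
  refine ⟨lA ++ lB, ?_, ?_, M, ?_⟩
  · rw [List.nodup_append]
    refine ⟨A.nodup_toList, B.nodup_toList, ?_⟩
    intro x hxA _ hxB rfl
    have h1 := hmemA x hxA
    have h2 := hmemB x hxB
    simp only [hAdef, Finset.mem_filter] at h1
    simp only [hBdef, Finset.mem_filter] at h2
    exact h2.2 h1.2
  · rw [List.toFinset_append]
    have e1 : lA.toFinset = A := Finset.toList_toFinset A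
    have e2 : lB.toFinset = B := Finset.toList_toFinset B
    rw [e1, e2, hAdef, hBdef]
    exact Finset.filter_union_filter_not_eq _ s
  · rw [hAs]
    have hrot : ((a :: as) ++ lB).rotate 1 = (as ++ lB) ++ [a] := by
      show (a :: (as ++ lB)).rotate 1 = (as ++ lB) ++ [a]
      rw [show (1 : ℕ) = 0 + 1 from rfl, List.rotate_cons_succ, List.rotate_zero]
    rw [hrot]
    have haA : a ∈ A := hmemA a (by rw [hAs]; simp)
    have hmemA' : ∀ x ∈ as, x ∈ A := fun x hx => hmemA x (by rw [hAs]; simp [hx])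
    exact auxA_count d M (· ∈ A) (· ∈ B) hAA hAB hBB hBA as lB a a haA hmemA'
      hlBne hmemB haA
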